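/- Let ε ≥ 0, c ≥ 0, let v be a value of the matrix game certified by optimal strategies, and let â be observed payoffs making (i, j, â) a repeated game with error cε. If limsup_{t→∞} r̂₁(t) ≤ ε and limsup_{t→∞} r̂₂(t) ≤ ε, then liminf_{t→∞} u(σ̂₁(t), br) ≥ v − 2(c+1)ε and limsup_{t→∞} u(br, σ̂₂(t)) ≤ v + 2(c+1)ε, where the best-response utilities are computed with respect to the exact payoff matrix a. (Proposition 6, inequalities (7).) -/

import Mathlib

open Finset Filter

/-- **Proposition 6, inequalities (7).**  In a repeated game with error `cε`, if both
players' observed average regrets have `limsup ≤ ε`, then the best-response utilities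
(with respect to the exact payoff matrix `a`) against the empirical frequencies satisfy
`liminf u(σ̂₁(t), br) ≥ v − 2(c+1)ε` and `limsup u(br, σ̂₂(t)) ≤ v + 2(c+1)ε`. -/
theorem stmt_5 {A B : Type*} [Fintype A] [Fintype B] [Nonempty A] [Nonempty B]
    [DecidableEq A] [DecidableEq B]
    (a : A → B → ℝ) (ha : ∀ i j, a i j ∈ Set.Icc (0 : ℝ) 1)
    (ε c : ℝ) (hε : 0 ≤ ε) (hc : 0 ≤ c) (v : ℝ)
    (pstar : A → ℝ) (hp0 : ∀ i, 0 ≤ pstar i) (hp1 : ∑ i, pstar i = 1)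
    (qstar : B → ℝ) (hq0 : ∀ j, 0 ≤ qstar j) (hq1 : ∑ j, qstar j = 1)
    (hpv : ∀ j, v ≤ ∑ i, pstar i * a i j)
    (hqv : ∀ i, ∑ j, qstar j * a i j ≤ v)
    (i : ℕ → A) (j : ℕ → B)
    (ahat : ℕ → A → B → ℝ)
    (hahat01 : ∀ s i₀ j₀, ahat s i₀ j₀ ∈ Set.Icc (0 : ℝ) 1)
    (herr : ∃ t₀ : ℕ, ∀ s ≥ t₀, ∀ i₀ j₀, |ahat s i₀ j₀ - a i₀ j₀| ≤ c * ε)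
    (r₁ r₂ : ℕ → ℝ)
    (hr₁ : ∀ t, r₁ t =
      ((univ.sup' univ_nonempty fun i₀ => ∑ s ∈ Finset.Icc 1 t, ahat s i₀ (j s))
        - ∑ s ∈ Finset.Icc 1 t, ahat s (i s) (j s)) / t)
    (hr₂ : ∀ t, r₂ t =
      ((∑ s ∈ Finset.Icc 1 t, ahat s (i s) (j s))
        - univ.inf' univ_nonempty fun j₀ => ∑ s ∈ Finset.Icc 1 t, ahat s (i s) j₀) / t)
    (h1 : limsup r₁ atTop ≤ ε)
    (h2 : limsup r₂ atTop ≤ ε)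
    (σ₁ : ℕ → A → ℝ) (σ₂ : ℕ → B → ℝ)
    (hσ₁ : ∀ t i₀, σ₁ t i₀ = (((Finset.Icc 1 t).filter (fun s => i s = i₀)).card : ℝ) / t)
    (hσ₂ : ∀ t j₀, σ₂ t j₀ = (((Finset.Icc 1 t).filter (fun s => j s = j₀)).card : ℝ) / t) :
    v - 2 * (c + 1) * ε ≤
      liminf (fun t => univ.inf' univ_nonempty fun j₀ => ∑ i₀, σ₁ t i₀ * a i₀ j₀) atTop ∧
    limsup (fun t => univ.sup' univ_nonempty fun i₀ => ∑ j₀, σ₂ t j₀ * a i₀ j₀) atTop ≤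
      v + 2 * (c + 1) * ε := by
  obtain ⟨t₀, ht₀⟩ := herr
  have hcε : (0:ℝ) ≤ c * ε := mul_nonneg hc hε
  -- pointwise error bound
  set δf : ℕ → ℝ := fun s => if t₀ ≤ s then c*ε else 1 with hδf
  have hδ0 : ∀ s, 0 ≤ δf s := by
    intro s; by_cases h : t₀ ≤ s <;> simp [hδf, h] <;> linarith
  have hδbound : ∀ s i₀ j₀, |ahat s i₀ j₀ - a i₀ j₀| ≤ δf s := by
    intro s i₀ j₀
    by_cases h : t₀ ≤ s
    · simpa [hδf, h] using ht₀ s h i₀ j₀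
    · simp only [hδf, if_neg h]
      obtain ⟨ha1, ha2⟩ := ha i₀ j₀
      obtain ⟨hb1, hb2⟩ := hahat01 s i₀ j₀
      rw [abs_le]; constructor <;> linarith
  have hδsum : ∀ t : ℕ, t₀ ≤ t → ∑ s ∈ Finset.Icc 1 t, δf s ≤ c*ε*t + t₀ := by
    intro t ht
    rw [show Finset.Icc 1 t = Finset.Ioc 0 t from (by ext x; simp only [Finset.mem_Icc, Finset.mem_Ioc]; omega),
      ← Finset.sum_Ioc_consecutive δf (Nat.zero_le t₀) ht]
    have hA : ∑ s ∈ Finset.Ioc 0 t₀, δf s ≤ (t₀ : ℝ) * (c*ε) + t₀ := by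
      have h1 := Finset.sum_le_card_nsmul (Finset.Ioc 0 t₀) δf (c*ε + 1) (by
        intro x _; by_cases h : t₀ ≤ x <;> simp [hδf, h] <;> linarith)
      rw [Nat.card_Ioc, nsmul_eq_mul] at h1
      have h2 : ((t₀ - 0 : ℕ) : ℝ) = (t₀ : ℝ) := by norm_num
      rw [h2] at h1; nlinarith
    have hB : ∑ s ∈ Finset.Ioc t₀ t, δf s ≤ (t : ℝ) * (c*ε) - (t₀ : ℝ) * (c*ε) := by
      have h1 := Finset.sum_le_card_nsmul (Finset.Ioc t₀ t) δf (c*ε) (by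
        intro x hx; simp only [Finset.mem_Ioc] at hx
        simp [hδf, hx.1.le])
      rw [Nat.card_Ioc, nsmul_eq_mul] at h1
      have h2 : ((t - t₀ : ℕ) : ℝ) = (t : ℝ) - (t₀ : ℝ) := by
        rw [Nat.cast_sub ht]
      rw [h2] at h1; nlinarith
    linarith [hA, hB]
  have hsumdiff : ∀ t : ℕ, t₀ ≤ t → ∀ f g : ℕ → ℝ, (∀ s, |f s - g s| ≤ δf s) →
      ∑ s ∈ Finset.Icc 1 t, f s ≤ (∑ s ∈ Finset.Icc 1 t, g s) + (c*ε*t + t₀) := by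
    intro t ht f g hfg
    have h1 : ∑ s ∈ Finset.Icc 1 t, (f s - g s) ≤ ∑ s ∈ Finset.Icc 1 t, δf s :=
      Finset.sum_le_sum fun s _ => (le_abs_self _).trans (hfg s)
    rw [Finset.sum_sub_distrib] at h1
    linarith [hδsum t ht]
  -- fiberwise counting identities
  have hcount2 : ∀ (t : ℕ) (f : B → ℝ),
      ∑ j₀, (((Finset.Icc 1 t).filter (fun s => j s = j₀)).card : ℝ) * f j₀
        = ∑ s ∈ Finset.Icc 1 t, f (j s) := by
    intro t f
    rw [← Finset.sum_fiberwise (Finset.Icc 1 t) j (fun s => f (j s))]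
    refine Finset.sum_congr rfl fun j₀ _ => ?_
    rw [Finset.sum_congr rfl (fun s hs => congrArg f (Finset.mem_filter.mp hs).2),
      Finset.sum_const, nsmul_eq_mul]
  have hcount1 : ∀ (t : ℕ) (f : A → ℝ),
      ∑ i₀, (((Finset.Icc 1 t).filter (fun s => i s = i₀)).card : ℝ) * f i₀
        = ∑ s ∈ Finset.Icc 1 t, f (i s) := by
    intro t f
    rw [← Finset.sum_fiberwise (Finset.Icc 1 t) i (fun s => f (i s))]
    refine Finset.sum_congr rfl fun i₀ _ => ?_
    rw [Finset.sum_congr rfl (fun s hs => congrArg f (Finset.mem_filter.mp hs).2),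
      Finset.sum_const, nsmul_eq_mul]
  have hσ₂sum : ∀ t i₀, ∑ j₀, σ₂ t j₀ * a i₀ j₀ = (∑ s ∈ Finset.Icc 1 t, a i₀ (j s)) / t := by
    intro t i₀
    rw [← hcount2 t (fun j₀ => a i₀ j₀), Finset.sum_div]
    exact Finset.sum_congr rfl fun j₀ _ => by rw [hσ₂ t j₀]; ring
  have hσ₁sum : ∀ t j₀, ∑ i₀, σ₁ t i₀ * a i₀ j₀ = (∑ s ∈ Finset.Icc 1 t, a (i s) j₀) / t := by
    intro t j₀
    rw [← hcount1 t (fun i₀ => a i₀ j₀), Finset.sum_div]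
    exact Finset.sum_congr rfl fun i₀ _ => by rw [hσ₁ t i₀]; ring
  -- the main pointwise bound
  have key : ∀ t : ℕ, max 1 t₀ ≤ t →
      (∀ i₀, ∑ j₀, σ₂ t j₀ * a i₀ j₀ ≤ v + (r₁ t + r₂ t + 2*(c*ε) + 2*t₀/t)) ∧
      (∀ j₀, v - (r₁ t + r₂ t + 2*(c*ε) + 2*t₀/t) ≤ ∑ i₀, σ₁ t i₀ * a i₀ j₀) := by
    intro t ht
    have ht1 : (1:ℕ) ≤ t := le_trans (le_max_left _ _) ht
    have ht₀t : t₀ ≤ t := le_trans (le_max_right _ _) ht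
    have htpos : (0:ℝ) < t := by exact_mod_cast Nat.lt_of_lt_of_le Nat.zero_lt_one ht1
    have htne : (t:ℝ) ≠ 0 := ne_of_gt htpos
    set S : ℝ := ∑ s ∈ Finset.Icc 1 t, ahat s (i s) (j s) with hS
    set Msup : ℝ := univ.sup' univ_nonempty fun i₀ => ∑ s ∈ Finset.Icc 1 t, ahat s i₀ (j s)
      with hMsup
    set minf : ℝ := univ.inf' univ_nonempty fun j₀ => ∑ s ∈ Finset.Icc 1 t, ahat s (i s) j₀
      with hminf
    have hBr1 : Msup = S + (t:ℝ) * r₁ t := by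
      rw [hr₁ t]; field_simp; simp only [hMsup, hS]; ring
    have hBr2 : S = minf + (t:ℝ) * r₂ t := by
      rw [hr₂ t]; field_simp; simp only [hminf, hS]; ring
    -- per-step weighted bounds
    have hq_s : ∀ s, ∑ j₀, qstar j₀ * ahat s (i s) j₀ ≤ v + δf s := by
      intro s
      have h1 : ∑ j₀, qstar j₀ * ahat s (i s) j₀
          ≤ ∑ j₀, qstar j₀ * (a (i s) j₀ + δf s) := by
        refine Finset.sum_le_sum fun j₀ _ => mul_le_mul_of_nonneg_left ?_ (hq0 j₀)
        have := (abs_le.mp (hδbound s (i s) j₀)).2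
        linarith
      have h2 : ∑ j₀, qstar j₀ * (a (i s) j₀ + δf s)
          = (∑ j₀, qstar j₀ * a (i s) j₀) + δf s := by
        rw [show (fun j₀ => qstar j₀ * (a (i s) j₀ + δf s))
            = fun j₀ => qstar j₀ * a (i s) j₀ + qstar j₀ * δf s from funext fun _ => by ring]
        rw [Finset.sum_add_distrib, ← Finset.sum_mul, hq1, one_mul]
      have h3 := hqv (i s)
      linarith
    have hp_s : ∀ s, v - δf s ≤ ∑ i₀, pstar i₀ * ahat s i₀ (j s) := by
      intro s
      have h1 : ∑ i₀, pstar i₀ * (a i₀ (j s) - δf s)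
          ≤ ∑ i₀, pstar i₀ * ahat s i₀ (j s) := by
        refine Finset.sum_le_sum fun i₀ _ => mul_le_mul_of_nonneg_left ?_ (hp0 i₀)
        have := (abs_le.mp (hδbound s i₀ (j s))).1
        linarith
      have h2 : ∑ i₀, pstar i₀ * (a i₀ (j s) - δf s)
          = (∑ i₀, pstar i₀ * a i₀ (j s)) - δf s := by
        rw [show (fun i₀ => pstar i₀ * (a i₀ (j s) - δf s))
            = fun i₀ => pstar i₀ * a i₀ (j s) - pstar i₀ * δf s from funext fun _ => by ring]
        rw [Finset.sum_sub_distrib, ← Finset.sum_mul, hp1, one_mul]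
      have h3 := hpv (j s)
      linarith
    -- minf ≤ t v + E
    have hD : minf ≤ (t:ℝ) * v + (c*ε*t + t₀) := by
      have h1 : minf ≤ ∑ j₀, qstar j₀ * (∑ s ∈ Finset.Icc 1 t, ahat s (i s) j₀) := by
        calc minf = minf * 1 := (mul_one _).symm
          _ = ∑ j₀, qstar j₀ * minf := by rw [← Finset.sum_mul, hq1]; ring
          _ ≤ _ := Finset.sum_le_sum fun j₀ _ => mul_le_mul_of_nonneg_left
              (Finset.inf'_le _ (Finset.mem_univ j₀)) (hq0 j₀)
      have h2 : ∑ j₀, qstar j₀ * (∑ s ∈ Finset.Icc 1 t, ahat s (i s) j₀)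
          = ∑ s ∈ Finset.Icc 1 t, ∑ j₀, qstar j₀ * ahat s (i s) j₀ := by
        rw [Finset.sum_comm]
        exact Finset.sum_congr rfl fun j₀ _ => Finset.mul_sum _ _ _
      have h3 : ∑ s ∈ Finset.Icc 1 t, ∑ j₀, qstar j₀ * ahat s (i s) j₀
          ≤ ∑ s ∈ Finset.Icc 1 t, (v + δf s) :=
        Finset.sum_le_sum fun s _ => hq_s s
      have h4 : ∑ s ∈ Finset.Icc 1 t, (v + δf s)
          ≤ (t:ℝ) * v + (c*ε*t + t₀) := by
        rw [Finset.sum_add_distrib, Finset.sum_const, Nat.card_Icc, nsmul_eq_mul]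
        have := hδsum t ht₀t
        have hcard : ((t + 1 - 1 : ℕ) : ℝ) = (t : ℝ) := by
          norm_num
        rw [hcard]
        linarith
      linarith
    -- t v − E ≤ Msup
    have hF : (t:ℝ) * v - (c*ε*t + t₀) ≤ Msup := by
      have h1 : ∑ i₀, pstar i₀ * (∑ s ∈ Finset.Icc 1 t, ahat s i₀ (j s)) ≤ Msup := by
        calc ∑ i₀, pstar i₀ * (∑ s ∈ Finset.Icc 1 t, ahat s i₀ (j s))
            ≤ ∑ i₀, pstar i₀ * Msup := Finset.sum_le_sum fun i₀ _ =>
              mul_le_mul_of_nonneg_left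
                (by rw [hMsup]
                    exact Finset.le_sup' (fun i₀ => ∑ s ∈ Finset.Icc 1 t, ahat s i₀ (j s))
                      (Finset.mem_univ i₀)) (hp0 i₀)
          _ = Msup := by rw [← Finset.sum_mul, hp1, one_mul]
      have h2 : ∑ i₀, pstar i₀ * (∑ s ∈ Finset.Icc 1 t, ahat s i₀ (j s))
          = ∑ s ∈ Finset.Icc 1 t, ∑ i₀, pstar i₀ * ahat s i₀ (j s) := by
        rw [Finset.sum_comm]
        exact Finset.sum_congr rfl fun i₀ _ => Finset.mul_sum _ _ _
      have h3 : ∑ s ∈ Finset.Icc 1 t, (v - δf s)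
          ≤ ∑ s ∈ Finset.Icc 1 t, ∑ i₀, pstar i₀ * ahat s i₀ (j s) :=
        Finset.sum_le_sum fun s _ => hp_s s
      have h4 : (t:ℝ) * v - (c*ε*t + t₀) ≤ ∑ s ∈ Finset.Icc 1 t, (v - δf s) := by
        rw [Finset.sum_sub_distrib, Finset.sum_const, Nat.card_Icc, nsmul_eq_mul]
        have := hδsum t ht₀t
        have hcard : ((t + 1 - 1 : ℕ) : ℝ) = (t : ℝ) := by norm_num
        rw [hcard]
        linarith
      linarith
    constructor
    · intro i₀
      rw [hσ₂sum t i₀]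
      have hA : ∑ s ∈ Finset.Icc 1 t, a i₀ (j s)
          ≤ (∑ s ∈ Finset.Icc 1 t, ahat s i₀ (j s)) + (c*ε*t + t₀) :=
        hsumdiff t ht₀t _ _ fun s => by
          have := hδbound s i₀ (j s); rwa [abs_sub_comm] at this
      have hA2 : ∑ s ∈ Finset.Icc 1 t, ahat s i₀ (j s) ≤ Msup := by
        rw [hMsup]
        exact Finset.le_sup' (fun i₀ => ∑ s ∈ Finset.Icc 1 t, ahat s i₀ (j s))
          (Finset.mem_univ i₀)
      have hnum : ∑ s ∈ Finset.Icc 1 t, a i₀ (j s)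
          ≤ (t:ℝ) * v + (t:ℝ) * r₁ t + (t:ℝ) * r₂ t + 2*(c*ε*t + t₀) := by
        linarith
      rw [div_le_iff₀ htpos]
      have hexp : (v + (r₁ t + r₂ t + 2*(c*ε) + 2*(t₀:ℝ)/t)) * t
          = (t:ℝ) * v + (t:ℝ) * r₁ t + (t:ℝ) * r₂ t + 2*(c*ε*t + t₀) := by
        field_simp; ring
      rw [hexp]; exact hnum
    · intro j₀
      rw [hσ₁sum t j₀]
      have hA : ∑ s ∈ Finset.Icc 1 t, ahat s (i s) j₀
          ≤ (∑ s ∈ Finset.Icc 1 t, a (i s) j₀) + (c*ε*t + t₀) :=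
        hsumdiff t ht₀t _ _ fun s => hδbound s (i s) j₀
      have hA2 : minf ≤ ∑ s ∈ Finset.Icc 1 t, ahat s (i s) j₀ := by
        rw [hminf]; exact Finset.inf'_le _ (Finset.mem_univ j₀)
      have hnum : (t:ℝ) * v - (t:ℝ) * r₁ t - (t:ℝ) * r₂ t - 2*(c*ε*t + t₀)
          ≤ ∑ s ∈ Finset.Icc 1 t, a (i s) j₀ := by
        linarith
      rw [le_div_iff₀ htpos]
      have hexp : (v - (r₁ t + r₂ t + 2*(c*ε) + 2*(t₀:ℝ)/t)) * t
          = (t:ℝ) * v - (t:ℝ) * r₁ t - (t:ℝ) * r₂ t - 2*(c*ε*t + t₀) := by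
        field_simp; ring
      rw [hexp]; exact hnum
  -- boundedness facts
  have hσ₂0 : ∀ t j₀, 0 ≤ σ₂ t j₀ := fun t j₀ => by
    rw [hσ₂]; positivity
  have hσ₁0 : ∀ t i₀, 0 ≤ σ₁ t i₀ := fun t i₀ => by
    rw [hσ₁]; positivity
  have hσ₂tot : ∀ t, ∑ j₀, σ₂ t j₀ ≤ 1 := by
    intro t
    have h1 : ∑ j₀, σ₂ t j₀ = (∑ s ∈ Finset.Icc 1 t, (1:ℝ)) / t := by
      rw [← hcount2 t (fun _ => (1:ℝ)), Finset.sum_div]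
      exact Finset.sum_congr rfl fun j₀ _ => by rw [hσ₂ t j₀]; ring
    rw [h1, Finset.sum_const, Nat.card_Icc, nsmul_eq_mul, mul_one]
    have : ((t + 1 - 1 : ℕ) : ℝ) = (t : ℝ) := by norm_num
    rw [this]
    exact div_self_le_one _
  have hσ₁tot : ∀ t, ∑ i₀, σ₁ t i₀ ≤ 1 := by
    intro t
    have h1 : ∑ i₀, σ₁ t i₀ = (∑ s ∈ Finset.Icc 1 t, (1:ℝ)) / t := by
      rw [← hcount1 t (fun _ => (1:ℝ)), Finset.sum_div]
      exact Finset.sum_congr rfl fun i₀ _ => by rw [hσ₁ t i₀]; ring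
    rw [h1, Finset.sum_const, Nat.card_Icc, nsmul_eq_mul, mul_one]
    have : ((t + 1 - 1 : ℕ) : ℝ) = (t : ℝ) := by norm_num
    rw [this]
    exact div_self_le_one _
  have hu₂0 : ∀ t, (0:ℝ) ≤ univ.sup' univ_nonempty fun i₀ => ∑ j₀, σ₂ t j₀ * a i₀ j₀ := by
    intro t
    refine le_trans ?_ (Finset.le_sup' _ (Finset.mem_univ (Classical.arbitrary A)))
    exact Finset.sum_nonneg fun j₀ _ => mul_nonneg (hσ₂0 t j₀) (ha _ j₀).1
  have hu₁1 : ∀ t, (univ.inf' univ_nonempty fun j₀ => ∑ i₀, σ₁ t i₀ * a i₀ j₀) ≤ 1 := by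
    intro t
    refine le_trans (Finset.inf'_le _ (Finset.mem_univ (Classical.arbitrary B))) ?_
    calc ∑ i₀, σ₁ t i₀ * a i₀ _ ≤ ∑ i₀, σ₁ t i₀ := Finset.sum_le_sum fun i₀ _ =>
          mul_le_of_le_one_right (hσ₁0 t i₀) (ha i₀ _).2
      _ ≤ 1 := hσ₁tot t
  -- regret boundedness
  have hr₁ub : ∀ t, r₁ t ≤ 1 := by
    intro t
    rcases Nat.eq_zero_or_pos t with h | h
    · subst h
      rw [hr₁ 0]; norm_num
    · have htpos : (0:ℝ) < t := by exact_mod_cast h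
      rw [hr₁ t, div_le_one htpos]
      have h1 : (univ.sup' univ_nonempty fun i₀ => ∑ s ∈ Finset.Icc 1 t, ahat s i₀ (j s))
          ≤ (t:ℝ) := by
        refine Finset.sup'_le _ _ fun i₀ _ => ?_
        calc ∑ s ∈ Finset.Icc 1 t, ahat s i₀ (j s) ≤ ∑ s ∈ Finset.Icc 1 t, (1:ℝ) :=
              Finset.sum_le_sum fun s _ => (hahat01 s i₀ (j s)).2
          _ = (t:ℝ) := by
              rw [Finset.sum_const, Nat.card_Icc, nsmul_eq_mul, mul_one]; norm_num
      have h2 : (0:ℝ) ≤ ∑ s ∈ Finset.Icc 1 t, ahat s (i s) (j s) :=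
        Finset.sum_nonneg fun s _ => (hahat01 s (i s) (j s)).1
      linarith
  have hr₂ub : ∀ t, r₂ t ≤ 1 := by
    intro t
    rcases Nat.eq_zero_or_pos t with h | h
    · subst h
      rw [hr₂ 0]; norm_num
    · have htpos : (0:ℝ) < t := by exact_mod_cast h
      rw [hr₂ t, div_le_one htpos]
      have h1 : (0:ℝ) ≤ univ.inf' univ_nonempty fun j₀ => ∑ s ∈ Finset.Icc 1 t, ahat s (i s) j₀ := by
        refine Finset.le_inf' _ _ fun j₀ _ => ?_
        exact Finset.sum_nonneg fun s _ => (hahat01 s (i s) j₀).1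
      have h2 : ∑ s ∈ Finset.Icc 1 t, ahat s (i s) (j s) ≤ (t:ℝ) := by
        calc ∑ s ∈ Finset.Icc 1 t, ahat s (i s) (j s) ≤ ∑ s ∈ Finset.Icc 1 t, (1:ℝ) :=
              Finset.sum_le_sum fun s _ => (hahat01 s (i s) (j s)).2
          _ = (t:ℝ) := by
              rw [Finset.sum_const, Nat.card_Icc, nsmul_eq_mul, mul_one]; norm_num
      linarith
  have hbd₁ : IsBoundedUnder (· ≤ ·) atTop r₁ := isBoundedUnder_of ⟨1, hr₁ub⟩
  have hbd₂ : IsBoundedUnder (· ≤ ·) atTop r₂ := isBoundedUnder_of ⟨1, hr₂ub⟩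
  -- eventual bounds for every positive slack
  have main : ∀ d : ℝ, 0 < d →
      (∀ᶠ t in atTop,
        (univ.sup' univ_nonempty fun i₀ => ∑ j₀, σ₂ t j₀ * a i₀ j₀) ≤ v + 2*(c+1)*ε + 4*d ∧
        v - (2*(c+1)*ε + 4*d) ≤ univ.inf' univ_nonempty fun j₀ => ∑ i₀, σ₁ t i₀ * a i₀ j₀) := by
    intro d hd
    have e1 : ∀ᶠ t in atTop, r₁ t < ε + d :=
      eventually_lt_of_limsup_lt (lt_of_le_of_lt h1 (by linarith)) hbd₁
    have e2 : ∀ᶠ t in atTop, r₂ t < ε + d :=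
      eventually_lt_of_limsup_lt (lt_of_le_of_lt h2 (by linarith)) hbd₂
    have e3 : ∀ᶠ t : ℕ in atTop, (t₀:ℝ)/t < d :=
      (tendsto_const_div_atTop_nhds_zero_nat (t₀:ℝ)).eventually_lt_const hd
    have e4 : ∀ᶠ t : ℕ in atTop, max 1 t₀ ≤ t := eventually_ge_atTop _
    filter_upwards [e1, e2, e3, e4] with t h1' h2' h3' h4'
    obtain ⟨k1, k2⟩ := key t h4'
    have hsl : r₁ t + r₂ t + 2*(c*ε) + 2*(t₀:ℝ)/t ≤ 2*(c+1)*ε + 4*d := by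
      have : 2*(t₀:ℝ)/t = 2*((t₀:ℝ)/t) := by ring
      rw [this]
      nlinarith
    constructor
    · refine Finset.sup'_le _ _ fun i₀ _ => ?_
      have := k1 i₀
      linarith
    · refine Finset.le_inf' _ _ fun j₀ _ => ?_
      have := k2 j₀
      linarith
  constructor
  · -- liminf side
    refine le_of_forall_pos_le_add fun d hd => ?_
    have hd4 : 0 < d/4 := by linarith
    have hcb : IsCoboundedUnder (· ≥ ·) atTop
        (fun t => univ.inf' univ_nonempty fun j₀ => ∑ i₀, σ₁ t i₀ * a i₀ j₀) :=
      (isBoundedUnder_of ⟨1, hu₁1⟩ : IsBoundedUnder (· ≤ ·) atTop _).isCoboundedUnder_flip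
    have hev := (main (d/4) hd4).mono fun t ht => ht.2
    have := le_liminf_of_le hcb hev
    calc v - 2*(c+1)*ε = (v - (2*(c+1)*ε + 4*(d/4))) + d := by ring
      _ ≤ _ + d := by linarith
  · -- limsup side
    refine le_of_forall_pos_le_add fun d hd => ?_
    have hd4 : 0 < d/4 := by linarith
    have hcb : IsCoboundedUnder (· ≤ ·) atTop
        (fun t => univ.sup' univ_nonempty fun i₀ => ∑ j₀, σ₂ t j₀ * a i₀ j₀) :=
      (isBoundedUnder_of ⟨0, hu₂0⟩ : IsBoundedUnder (· ≥ ·) atTop _).isCoboundedUnder_flip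
    have hev := (main (d/4) hd4).mono fun t ht => ht.1
    have := limsup_le_of_le hcb hev
    calc limsup _ atTop ≤ v + 2*(c+1)*ε + 4*(d/4) := this
      _ ≤ v + 2*(c+1)*ε + d := by linarith
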